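/- Let f_1,...,f_n : ℝ^d → ℝ each be convex and differentiable, with f_i being L_i-smooth (gradient L_i-Lipschitz), and set f = (1/n)∑ f_i and L_max = max_i L_i. Let x* be a minimizer of f. Then for all x, (1/n)∑_i ‖∇f_i(x)‖² ≤ 4 L_max (f(x) - f(x*)) + 2·(1/n)∑_i ‖∇f_i(x*)‖². -/

import Mathlib

open scoped RealInnerProductSpace

section Helpers

variable {E : Type*} [NormedAddCommGroup E] [InnerProductSpace ℝ E] [CompleteSpace E]

lemma vt_line_hasDerivAt {f : E → ℝ} (hdiff : Differentiable ℝ f) (x v : E) (t : ℝ) :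
    HasDerivAt (fun t : ℝ => f (x + t • v)) ⟪gradient f (x + t • v), v⟫ t := by
  have hc : HasDerivAt (fun t : ℝ => x + t • v) v t := by
    simpa using ((hasDerivAt_id t).smul_const v).const_add x
  have hg := (hdiff (x + t • v)).hasGradientAt.hasFDerivAt
  have := hg.comp_hasDerivAt t hc
  simpa [InnerProductSpace.toDual_apply_apply, Function.comp_def] using this

lemma vt_conv_grad_ineq {f : E → ℝ} (hconv : ConvexOn ℝ Set.univ f)
    (hdiff : Differentiable ℝ f) (x y : E) :
    f x + ⟪gradient f x, y - x⟫ ≤ f y := by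
  set g : ℝ → ℝ := fun t => f (x + t • (y - x)) with hg
  have hgc : ConvexOn ℝ Set.univ g := by
    have := hconv.comp_affineMap (AffineMap.lineMap x y : ℝ →ᵃ[ℝ] E)
    have heq : ∀ t : ℝ, (AffineMap.lineMap x y : ℝ →ᵃ[ℝ] E) t = x + t • (y - x) := by
      intro t; simp [AffineMap.lineMap_apply]; module
    have h3 : (f ∘ (AffineMap.lineMap x y : ℝ →ᵃ[ℝ] E)) = g := by
      funext t; simp [Function.comp, heq, hg]
    simpa [h3] using this
  have hd : HasDerivAt g ⟪gradient f x, y - x⟫ 0 := by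
    have := vt_line_hasDerivAt hdiff x (y - x) 0
    simpa using this
  have := hgc.le_slope_of_hasDerivAt (Set.mem_univ (0:ℝ)) (Set.mem_univ (1:ℝ)) one_pos hd
  rw [slope_def_field] at this
  have hg0 : g 0 = f x := by simp [hg]
  have hg1 : g 1 = f y := by simp [hg]
  simp [hg0, hg1] at this
  have hi : ⟪gradient f x, y - x⟫ = (fderiv ℝ f x) y - (fderiv ℝ f x) x := by simp
  linarith

lemma vt_descent_lemma {f : E → ℝ} {ℓ : ℝ} (hdiff : Differentiable ℝ f)
    (hlip : ∀ z w, ‖gradient f z - gradient f w‖ ≤ ℓ * ‖z - w‖) (x y : E) :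
    f y ≤ f x + ⟪gradient f x, y - x⟫ + ℓ / 2 * ‖y - x‖ ^ 2 := by
  set v := y - x with hv
  set g' : ℝ → ℝ := fun t => ⟪gradient f (x + t • v), v⟫ with hg'
  have hderiv : ∀ t ∈ Set.uIcc (0:ℝ) 1, HasDerivAt (fun t : ℝ => f (x + t • v)) (g' t) t :=
    fun t _ => vt_line_hasDerivAt hdiff x v t
  have hgradcont : Continuous fun t : ℝ => gradient f (x + t • v) := by
    have hlc : LipschitzWith (Real.toNNReal ℓ) (gradient f) := by
      apply LipschitzWith.of_dist_le_mul
      intro z w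
      rw [dist_eq_norm]
      calc ‖gradient f z - gradient f w‖ ≤ ℓ * ‖z - w‖ := hlip z w
        _ ≤ Real.toNNReal ℓ * ‖z - w‖ :=
            mul_le_mul_of_nonneg_right (Real.le_coe_toNNReal ℓ) (norm_nonneg _)
        _ = Real.toNNReal ℓ * dist z w := by rw [dist_eq_norm]
    exact hlc.continuous.comp (by continuity)
  have hcont : ContinuousOn g' (Set.uIcc (0:ℝ) 1) :=
    (continuous_inner.comp (hgradcont.prodMk continuous_const)).continuousOn
  have hftc : ∫ t in (0:ℝ)..1, g' t = f (x + (1:ℝ) • v) - f (x + (0:ℝ) • v) :=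
    intervalIntegral.integral_eq_sub_of_hasDerivAt hderiv
      hcont.intervalIntegrable
  have hbound : ∀ t ∈ Set.Icc (0:ℝ) 1, g' t ≤ g' 0 + (ℓ * ‖v‖ ^ 2) * t := by
    intro t ht
    have h1 : g' t - g' 0 = ⟪gradient f (x + t • v) - gradient f x, v⟫ := by
      simp [hg', inner_sub_left]
    have h2 : ⟪gradient f (x + t • v) - gradient f x, v⟫ ≤
        ‖gradient f (x + t • v) - gradient f x‖ * ‖v‖ := real_inner_le_norm _ _
    have h3 : ‖gradient f (x + t • v) - gradient f x‖ ≤ ℓ * (t * ‖v‖) := by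
      have := hlip (x + t • v) x
      simpa [norm_smul, abs_of_nonneg ht.1] using this
    have hvn : (0:ℝ) ≤ ‖v‖ := norm_nonneg _
    nlinarith [h2, mul_le_mul_of_nonneg_right h3 hvn]
  have hint2 : IntervalIntegrable (fun t => g' 0 + (ℓ * ‖v‖ ^ 2) * t) MeasureTheory.volume 0 1 :=
    (continuous_const.add (continuous_const.mul continuous_id)).intervalIntegrable 0 1
  have hmono := intervalIntegral.integral_mono_on (by norm_num)
    hcont.intervalIntegrable hint2 hbound
  have hrhs : ∫ t in (0:ℝ)..1, (g' 0 + (ℓ * ‖v‖ ^ 2) * t) = g' 0 + ℓ / 2 * ‖v‖ ^ 2 := by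
    have hmul : IntervalIntegrable (fun t : ℝ => ℓ * ‖v‖ ^ 2 * t) MeasureTheory.volume 0 1 := by
      apply Continuous.intervalIntegrable; continuity
    rw [intervalIntegral.integral_add intervalIntegrable_const hmul,
      intervalIntegral.integral_const, intervalIntegral.integral_const_mul, integral_id]
    norm_num; ring
  have hg'0 : g' 0 = ⟪gradient f x, v⟫ := by simp [hg']
  have h10 : f (x + (1:ℝ) • v) = f y := by norm_num [hv]
  have h00 : f (x + (0:ℝ) • v) = f x := by norm_num
  rw [h10, h00] at hftc
  rw [hrhs, hg'0] at hmono
  linarith [hmono, hftc.symm.le]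

lemma vt_per_fn {f : E → ℝ} {ℓ Lmax : ℝ} (hconv : ConvexOn ℝ Set.univ f)
    (hdiff : Differentiable ℝ f)
    (hlip : ∀ z w, ‖gradient f z - gradient f w‖ ≤ ℓ * ‖z - w‖)
    (hle : ℓ ≤ Lmax) (x y : E) :
    ‖gradient f x‖ ^ 2 ≤
      4 * Lmax * (f x - f y - ⟪gradient f y, x - y⟫) + 2 * ‖gradient f y‖ ^ 2 := by
  set D := f x - f y - ⟪gradient f y, x - y⟫ with hD
  have hD0 : 0 ≤ D := by
    have := vt_conv_grad_ineq hconv hdiff y x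
    simp only [hD]; linarith
  by_cases hl : ℓ ≤ 0
  · have hu : gradient f x - gradient f y = 0 := by
      have h1 := hlip x y
      have h2 : ℓ * ‖x - y‖ ≤ 0 := mul_nonpos_of_nonpos_of_nonneg hl (norm_nonneg _)
      exact norm_le_zero_iff.mp (le_trans h1 h2)
    have hgx : gradient f x = gradient f y := by rwa [sub_eq_zero] at hu
    have h2 := vt_conv_grad_ineq hconv hdiff x y
    rw [hgx] at h2
    have hiy : ⟪gradient f y, y - x⟫ = -⟪gradient f y, x - y⟫ := by
      rw [← neg_sub x y, inner_neg_right]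
    have hDle : D ≤ 0 := by simp only [hD]; rw [hiy] at h2; linarith
    have hDeq : D = 0 := le_antisymm hDle hD0
    rw [hgx, hDeq]
    nlinarith [sq_nonneg ‖gradient f y‖]
  · push_neg at hl
    set u := gradient f x - gradient f y with hu
    set y' := x - ℓ⁻¹ • u with hy'
    have hA := vt_conv_grad_ineq hconv hdiff y y'
    have hB := vt_descent_lemma hdiff hlip x y'
    have e1 : y' - x = -(ℓ⁻¹ • u) := by rw [hy']; abel
    have e2 : ⟪gradient f x, y' - x⟫ = -(ℓ⁻¹ * ⟪gradient f x, u⟫) := by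
      rw [e1, inner_neg_right, real_inner_smul_right]
    have e3 : ‖y' - x‖ ^ 2 = ℓ⁻¹ ^ 2 * ‖u‖ ^ 2 := by
      rw [e1, norm_neg, norm_smul]
      rw [Real.norm_eq_abs, abs_of_pos (inv_pos.mpr hl)]
      ring
    have e4 : y' - y = (x - y) - ℓ⁻¹ • u := by rw [hy']; abel
    have e5 : ⟪gradient f y, y' - y⟫ = ⟪gradient f y, x - y⟫ - ℓ⁻¹ * ⟪gradient f y, u⟫ := by
      rw [e4, inner_sub_right, real_inner_smul_right]
    have e6 : ⟪gradient f x, u⟫ - ⟪gradient f y, u⟫ = ‖u‖ ^ 2 := by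
      rw [← inner_sub_left, ← hu, real_inner_self_eq_norm_sq]
    rw [e2, e3] at hB
    rw [e5] at hA
    have e7 : ℓ⁻¹ * ⟪gradient f x, u⟫ - ℓ⁻¹ * ⟪gradient f y, u⟫ = ℓ⁻¹ * ‖u‖ ^ 2 := by
      rw [← mul_sub, e6]
    have hkey : ℓ⁻¹ * ‖u‖ ^ 2 - ℓ / 2 * (ℓ⁻¹ ^ 2 * ‖u‖ ^ 2) ≤ D := by
      simp only [hD]; linarith [hA, hB, e7]
    have hne : ℓ ≠ 0 := ne_of_gt hl
    have hu2 : ‖u‖ ^ 2 ≤ 2 * ℓ * D := by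
      have h1 := mul_le_mul_of_nonneg_left hkey (by linarith : (0:ℝ) ≤ 2 * ℓ)
      have h2 : 2 * ℓ * (ℓ⁻¹ * ‖u‖ ^ 2 - ℓ / 2 * (ℓ⁻¹ ^ 2 * ‖u‖ ^ 2)) = ‖u‖ ^ 2 := by
        field_simp; ring
      rw [h2] at h1; exact h1
    have hnle : ‖gradient f x‖ ≤ ‖u‖ + ‖gradient f y‖ := by
      have : gradient f x = u + gradient f y := by rw [hu]; abel
      rw [this]; exact norm_add_le _ _
    have h2l : 2 * ℓ * D ≤ 2 * Lmax * D := by nlinarith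
    nlinarith [hnle, hu2, h2l, sq_nonneg (‖u‖ - ‖gradient f y‖), norm_nonneg u,
      norm_nonneg (gradient f x), norm_nonneg (gradient f y)]

end Helpers

/-- Variance transfer lemma. -/
theorem variance_transfer (d n : ℕ) (hn : 0 < n)
    (f : Fin n → EuclideanSpace ℝ (Fin d) → ℝ) (L : Fin n → ℝ) (Lmax : ℝ)
    (hconv : ∀ i, ConvexOn ℝ Set.univ (f i))
    (hdiff : ∀ i, Differentiable ℝ (f i))
    (hlip : ∀ i x y, ‖gradient (f i) x - gradient (f i) y‖ ≤ L i * ‖x - y‖)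
    (hLmax : IsGreatest (Set.range L) Lmax)
    (F : EuclideanSpace ℝ (Fin d) → ℝ) (hF : ∀ x, F x = (∑ i, f i x) / n)
    (xstar : EuclideanSpace ℝ (Fin d)) (hmin : ∀ y, F xstar ≤ F y)
    (x : EuclideanSpace ℝ (Fin d)) :
    (∑ i, ‖gradient (f i) x‖ ^ 2) / n ≤
      4 * Lmax * (F x - F xstar) + 2 * ((∑ i, ‖gradient (f i) xstar‖ ^ 2) / n) := by
  have hni : (0:ℝ) < n := by exact_mod_cast hn
  -- per-function bound
  have hper : ∀ i, ‖gradient (f i) x‖ ^ 2 ≤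
      4 * Lmax * (f i x - f i xstar - ⟪gradient (f i) xstar, x - xstar⟫) +
        2 * ‖gradient (f i) xstar‖ ^ 2 :=
    fun i => vt_per_fn (hconv i) (hdiff i) (hlip i) (hLmax.2 ⟨i, rfl⟩) x xstar
  -- gradient of the sum vanishes at xstar
  have hfd : HasFDerivAt (fun z => ∑ i, f i z)
      (∑ i, InnerProductSpace.toDual ℝ (EuclideanSpace ℝ (Fin d)) (gradient (f i) xstar)) xstar :=
    HasFDerivAt.fun_sum fun i _ => ((hdiff i) xstar).hasGradientAt.hasFDerivAt
  have hlocmin : IsLocalMin (fun z => ∑ i, f i z) xstar := by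
    apply Filter.Eventually.of_forall
    intro z
    have h1 := hmin z
    rw [hF xstar, hF z] at h1
    exact (div_le_div_iff_of_pos_right hni).mp h1
  have hzero : (∑ i, InnerProductSpace.toDual ℝ (EuclideanSpace ℝ (Fin d)) (gradient (f i) xstar)) = 0 := by
    rw [← hfd.fderiv]; exact hlocmin.fderiv_eq_zero
  have hgsum : ∑ i, ⟪gradient (f i) xstar, x - xstar⟫ = 0 := by
    have := congrFun (congrArg DFunLike.coe hzero) (x - xstar)
    simpa [ContinuousLinearMap.sum_apply, InnerProductSpace.toDual_apply_apply] using this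
  have hsx : ∑ i, f i x = n * F x := by rw [hF x]; field_simp
  have hsxs : ∑ i, f i xstar = n * F xstar := by rw [hF xstar]; field_simp
  have hsum : ∑ i, ‖gradient (f i) x‖ ^ 2 ≤
      4 * Lmax * (n * (F x - F xstar)) + 2 * ∑ i, ‖gradient (f i) xstar‖ ^ 2 := by
    calc ∑ i, ‖gradient (f i) x‖ ^ 2
        ≤ ∑ i, (4 * Lmax * (f i x - f i xstar - ⟪gradient (f i) xstar, x - xstar⟫) +
            2 * ‖gradient (f i) xstar‖ ^ 2) := Finset.sum_le_sum fun i _ => hper i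
      _ = 4 * Lmax * (∑ i, f i x - ∑ i, f i xstar -
            ∑ i, ⟪gradient (f i) xstar, x - xstar⟫) +
            2 * ∑ i, ‖gradient (f i) xstar‖ ^ 2 := by
          rw [Finset.sum_add_distrib, ← Finset.mul_sum, ← Finset.mul_sum]
          congr 2
          rw [Finset.sum_sub_distrib, Finset.sum_sub_distrib]
      _ = 4 * Lmax * (n * (F x - F xstar)) + 2 * ∑ i, ‖gradient (f i) xstar‖ ^ 2 := by
          rw [hgsum, hsx, hsxs]; ring
  calc (∑ i, ‖gradient (f i) x‖ ^ 2) / n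
      ≤ (4 * Lmax * (n * (F x - F xstar)) + 2 * ∑ i, ‖gradient (f i) xstar‖ ^ 2) / n := by
        gcongr
    _ = 4 * Lmax * (F x - F xstar) + 2 * ((∑ i, ‖gradient (f i) xstar‖ ^ 2) / n) := by
        field_simp
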